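/- Let 1 ≤ p < ∞. There exist constants C₁ > 0 and C₂ > 0 such that C₁ \widetilde{‖f‖}_{∞,p} ≤ ‖f‖_{∞,p} ≤ C₂ \widetilde{‖f‖}_{∞,p} for every μ-measurable function f on ℝ. -/

import Mathlib

open MeasureTheory Set
open scoped ENNReal

/-- The weighted Lebesgue measure `dμ(x) = (2^{k+1} Γ(k+1))⁻¹ |x|^{2k+1} dx`. -/
noncomputable def dunklMeasure (k : ℝ) : Measure ℝ :=
  (volume : Measure ℝ).withDensity
    (fun x => ENNReal.ofReal ((2 ^ (k + 1) * Real.Gamma (k + 1))⁻¹ * |x| ^ (2 * k + 1)))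
/-- The "ball" `B(x,r)`: for `x ≠ 0`, `{y : max 0 (|x|-r) < |y| < |x|+r}`; `B(0,r) = (-r,r)`. -/
def dunklBall (x r : ℝ) : Set ℝ :=
  if x = 0 then Set.Ioo (-r) r
  else {y : ℝ | max 0 (|x| - r) < |y| ∧ |y| < |x| + r}
/-- `Q_l = [l, l+1)`. -/
def Qcube (l : ℤ) : Set ℝ := Set.Ico (l : ℝ) ((l : ℝ) + 1)
/-- `_r‖f‖_{∞,p}`, the `L^p(μ)`-norm in `y` of `‖f χ_{B(y,r)}‖_{L^∞(μ)}`. -/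
noncomputable def rNorm (k : ℝ) (r : ℝ) (p : ℝ≥0∞) (f : ℝ → ℂ) : ℝ≥0∞ :=
  if p = ⊤ then
    essSup (fun y => eLpNorm ((dunklBall y r).indicator f) ⊤ (dunklMeasure k)) (dunklMeasure k)
  else
    (∫⁻ y, (eLpNorm ((dunklBall y r).indicator f) ⊤ (dunklMeasure k)) ^ p.toReal
        ∂(dunklMeasure k)) ^ (1 / p.toReal)
/-- `‖f‖_{∞,p} = _1‖f‖_{∞,p}`. -/
noncomputable def wNorm (k : ℝ) (p : ℝ≥0∞) (f : ℝ → ℂ) : ℝ≥0∞ := rNorm k 1 p f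
/-- The discrete norm `\widetilde{‖f‖}_{q,p}`. -/
noncomputable def tNorm (k : ℝ) (q p : ℝ≥0∞) (f : ℝ → ℂ) : ℝ≥0∞ :=
  if p = ⊤ then ⨆ l : ℤ, eLpNorm ((Qcube l).indicator f) q (dunklMeasure k)
  else (∑' l : ℤ,
      dunklMeasure k (Qcube l) * (eLpNorm ((Qcube l).indicator f) q (dunklMeasure k)) ^ p.toReal)
    ^ (1 / p.toReal)

namespace Stmt6Aux


lemma dc_pos (k : ℝ) (hk : -1/2 < k) : 0 < (2 ^ (k + 1) * Real.Gamma (k + 1))⁻¹ := by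
  have h1 : (0:ℝ) < 2 ^ (k+1) := Real.rpow_pos_of_pos two_pos _
  have h2 : 0 < Real.Gamma (k+1) := Real.Gamma_pos_of_pos (by linarith)
  positivity

lemma meas_apply (k : ℝ) {s : Set ℝ} (hs : MeasurableSet s) :
    dunklMeasure k s
      = ∫⁻ x in s, ENNReal.ofReal ((2 ^ (k + 1) * Real.Gamma (k + 1))⁻¹ * |x| ^ (2 * k + 1)) := by
  rw [dunklMeasure, withDensity_apply _ hs]

lemma meas_singleton (k : ℝ) (x : ℝ) : dunklMeasure k {x} = 0 := by
  rw [meas_apply k (measurableSet_singleton x)]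
  rw [Measure.restrict_eq_zero.2 (by simp)]
  simp



lemma cube_le (k : ℝ) (hk : -1/2 < k) (l : ℤ) (hl : 0 ≤ l) :
    dunklMeasure k (Qcube l)
      ≤ ENNReal.ofReal ((2 ^ (k + 1) * Real.Gamma (k + 1))⁻¹ * ((l:ℝ)+1) ^ (2 * k + 1)) := by
  set c := (2 ^ (k + 1) * Real.Gamma (k + 1))⁻¹ with hc
  have hcpos := dc_pos k hk
  have hl' : (0:ℝ) ≤ (l:ℝ) := by exact_mod_cast hl
  rw [Qcube, meas_apply k measurableSet_Ico]
  calc ∫⁻ x in Ico ((l:ℝ)) ((l:ℝ)+1), ENNReal.ofReal (c * |x| ^ (2*k+1))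
      ≤ ∫⁻ _ in Ico ((l:ℝ)) ((l:ℝ)+1), ENNReal.ofReal (c * ((l:ℝ)+1) ^ (2*k+1)) := by
        apply setLIntegral_mono' measurableSet_Ico
        intro x hx
        apply ENNReal.ofReal_le_ofReal
        apply mul_le_mul_of_nonneg_left _ hcpos.le
        have h1 : |x| = x := abs_of_nonneg (le_trans hl' hx.1)
        rw [h1]
        exact Real.rpow_le_rpow (le_trans hl' hx.1) hx.2.le (by linarith)
    _ = ENNReal.ofReal (c * ((l:ℝ)+1) ^ (2*k+1)) := by
        rw [setLIntegral_const, Real.volume_Ico]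
        simp

lemma cube_ge (k : ℝ) (hk : -1/2 < k) (l : ℤ) (hl : 0 ≤ l) :
    ENNReal.ofReal ((2 ^ (k + 1) * Real.Gamma (k + 1))⁻¹ * (l:ℝ) ^ (2 * k + 1))
      ≤ dunklMeasure k (Qcube l) := by
  set c := (2 ^ (k + 1) * Real.Gamma (k + 1))⁻¹ with hc
  have hcpos := dc_pos k hk
  have hl' : (0:ℝ) ≤ (l:ℝ) := by exact_mod_cast hl
  rw [Qcube, meas_apply k measurableSet_Ico]
  calc ENNReal.ofReal (c * (l:ℝ) ^ (2*k+1))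
      = ∫⁻ _ in Ico ((l:ℝ)) ((l:ℝ)+1), ENNReal.ofReal (c * (l:ℝ) ^ (2*k+1)) := by
        rw [setLIntegral_const, Real.volume_Ico]; simp
    _ ≤ ∫⁻ x in Ico ((l:ℝ)) ((l:ℝ)+1), ENNReal.ofReal (c * |x| ^ (2*k+1)) := by
        apply setLIntegral_mono' measurableSet_Ico
        intro x hx
        apply ENNReal.ofReal_le_ofReal
        apply mul_le_mul_of_nonneg_left _ hcpos.le
        rw [abs_of_nonneg (le_trans hl' hx.1)]
        exact Real.rpow_le_rpow hl' hx.1 (by linarith)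

lemma cube0_ge (k : ℝ) (hk : -1/2 < k) :
    ENNReal.ofReal ((2 ^ (k + 1) * Real.Gamma (k + 1))⁻¹ * (2:ℝ) ^ (-(2 * k + 1) - 1))
      ≤ dunklMeasure k (Qcube 0) := by
  set c := (2 ^ (k + 1) * Real.Gamma (k + 1))⁻¹ with hc
  have hcpos := dc_pos k hk
  have hsub : Ico ((1:ℝ)/2) 1 ⊆ Qcube 0 := by
    rw [Qcube]; intro x hx; simp only [Int.cast_zero, zero_add, mem_Ico] at *
    constructor <;> [linarith [hx.1]; exact hx.2]
  refine le_trans ?_ (measure_mono hsub)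
  rw [meas_apply k measurableSet_Ico]
  have e1 : ((1:ℝ)/2) ^ (2*k+1) = (2:ℝ) ^ (-(2*k+1)) := by
    rw [one_div, Real.inv_rpow (by norm_num), ← Real.rpow_neg (by norm_num)]
  have e2 : (2:ℝ) ^ (-(2*k+1)-1) = (2:ℝ) ^ (-(2*k+1)) * (1/2) := by
    rw [Real.rpow_sub (by norm_num), Real.rpow_one]; ring
  calc ENNReal.ofReal (c * (2:ℝ) ^ (-(2*k+1)-1))
      = ∫⁻ _ in Ico ((1:ℝ)/2) 1, ENNReal.ofReal (c * ((1:ℝ)/2) ^ (2*k+1)) := by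
        rw [setLIntegral_const, Real.volume_Ico, ← ENNReal.ofReal_mul (by positivity)]
        rw [e1, e2]; norm_num; ring_nf
    _ ≤ ∫⁻ x in Ico ((1:ℝ)/2) 1, ENNReal.ofReal (c * |x| ^ (2*k+1)) := by
        apply setLIntegral_mono' measurableSet_Ico
        intro x hx
        apply ENNReal.ofReal_le_ofReal
        apply mul_le_mul_of_nonneg_left _ hcpos.le
        rw [abs_of_nonneg (by linarith [hx.1])]
        exact Real.rpow_le_rpow (by norm_num) hx.1 (by linarith)

lemma meas_density_meas (k : ℝ) (hk : -1/2 < k) :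
    Measurable (fun x : ℝ => ENNReal.ofReal ((2 ^ (k + 1) * Real.Gamma (k + 1))⁻¹ * |x| ^ (2 * k + 1))) := by
  apply ENNReal.measurable_ofReal.comp
  exact (measurable_const.mul
    ((continuous_abs.rpow_const (fun x => Or.inr (by linarith))).measurable))

lemma cube_sym (k : ℝ) (hk : -1/2 < k) (l : ℤ) :
    dunklMeasure k (Qcube (-1 - l)) = dunklMeasure k (Qcube l) := by
  have hIoc : dunklMeasure k (Ioc ((l:ℝ)) ((l:ℝ)+1)) = dunklMeasure k (Qcube l) := by
    rw [Qcube]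
    have h1 : Ioc ((l:ℝ)) ((l:ℝ)+1) =ᵐ[dunklMeasure k] Icc ((l:ℝ)) ((l:ℝ)+1) :=
      Ioc_ae_eq_Icc' (meas_singleton k _)
    have h2 : Ico ((l:ℝ)) ((l:ℝ)+1) =ᵐ[dunklMeasure k] Icc ((l:ℝ)) ((l:ℝ)+1) :=
      Ico_ae_eq_Icc' (meas_singleton k _)
    rw [measure_congr h1, measure_congr h2]
  rw [← hIoc, Qcube, meas_apply k measurableSet_Ico,
    meas_apply k measurableSet_Ioc]
  rw [← lintegral_indicator measurableSet_Ico, ← lintegral_indicator measurableSet_Ioc]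
  rw [← (Measure.measurePreserving_neg (volume : Measure ℝ)).lintegral_comp_emb
    (MeasurableEquiv.neg ℝ).measurableEmbedding]
  congr 1
  funext x
  show (Ico _ _).indicator _ (-x) = (Ioc _ _).indicator _ x
  have hmem : ((-x) ∈ Ico (((-1-l:ℤ)):ℝ) ((((-1-l:ℤ)):ℝ)+1)) ↔ x ∈ Ioc ((l:ℝ)) ((l:ℝ)+1) := by
    push_cast
    simp only [mem_Ico, mem_Ioc]
    constructor <;> intro h <;> constructor <;> linarith [h.1, h.2]
  by_cases hx : x ∈ Ioc ((l:ℝ)) ((l:ℝ)+1)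
  · rw [Set.indicator_of_mem (hmem.2 hx), Set.indicator_of_mem hx, abs_neg]
  · rw [Set.indicator_of_notMem (fun h => hx (hmem.1 h)), Set.indicator_of_notMem hx]

noncomputable def Dconst (k : ℝ) : ℝ≥0∞ := ENNReal.ofReal ((2:ℝ) ^ (2*(2*k+1)+1))

lemma Dconst_one_le (k : ℝ) (hk : -1/2 < k) : 1 ≤ Dconst k := by
  rw [Dconst, ENNReal.one_le_ofReal]
  exact Real.one_le_rpow (by norm_num) (by linarith)

lemma Dconst_pos (k : ℝ) (hk : -1/2 < k) : 0 < Dconst k :=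
  lt_of_lt_of_le zero_lt_one (Dconst_one_le k hk)

lemma Dconst_ne_top (k : ℝ) : Dconst k ≠ ⊤ := ENNReal.ofReal_ne_top

lemma adj_nat (k : ℝ) (hk : -1/2 < k) (l : ℤ) (hl : 0 ≤ l) :
    dunklMeasure k (Qcube l) ≤ Dconst k * dunklMeasure k (Qcube (l+1)) ∧
    dunklMeasure k (Qcube (l+1)) ≤ Dconst k * dunklMeasure k (Qcube l) := by
  set c := (2 ^ (k + 1) * Real.Gamma (k + 1))⁻¹ with hc
  have hcpos := dc_pos k hk
  have ha : (0:ℝ) < 2*k+1 := by linarith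
  constructor
  · calc dunklMeasure k (Qcube l)
        ≤ ENNReal.ofReal (c * ((l:ℝ)+1) ^ (2*k+1)) := cube_le k hk l hl
      _ ≤ dunklMeasure k (Qcube (l+1)) := by
          have := cube_ge k hk (l+1) (by omega)
          push_cast at this ⊢
          exact this
      _ ≤ Dconst k * dunklMeasure k (Qcube (l+1)) := by
          nth_rewrite 1 [← one_mul (dunklMeasure k (Qcube (l+1)))]
          exact mul_le_mul_left (Dconst_one_le k hk) _
  · rcases eq_or_lt_of_le hl with h0 | h1
    · -- l = 0
      have h0' : l = 0 := h0.symm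
      subst h0'
      calc dunklMeasure k (Qcube (0+1))
          ≤ ENNReal.ofReal (c * ((0:ℝ)+1+1) ^ (2*k+1)) := by
            have := cube_le k hk 1 (by omega); push_cast at this ⊢; convert this using 3 <;> norm_num
        _ ≤ Dconst k * ENNReal.ofReal (c * (2:ℝ) ^ (-(2*k+1)-1)) := by
            rw [Dconst, ← ENNReal.ofReal_mul (by positivity)]
            apply ENNReal.ofReal_le_ofReal
            have e0 : (2:ℝ)^(2*(2*k+1)+1) * (2:ℝ)^(-(2*k+1)-1) = (2:ℝ)^(2*k+1) := by
              rw [← Real.rpow_add (by norm_num : (0:ℝ) < 2)]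
              congr 1; ring
            have e1 : (2:ℝ) ^ (2*(2*k+1)+1) * (c * (2:ℝ)^(-(2*k+1)-1)) = c * (2:ℝ)^(2*k+1) := by
              rw [mul_comm c ((2:ℝ)^(-(2*k+1)-1)), ← mul_assoc, e0, mul_comm]
            rw [e1]
            norm_num
        _ ≤ Dconst k * dunklMeasure k (Qcube 0) :=
            mul_le_mul_right (cube0_ge k hk) _
    · -- 1 ≤ l
      have hl1 : (1:ℝ) ≤ (l:ℝ) := by exact_mod_cast h1
      calc dunklMeasure k (Qcube (l+1))
          ≤ ENNReal.ofReal (c * (((l:ℝ)+1)+1) ^ (2*k+1)) := by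
            have := cube_le k hk (l+1) (by omega); push_cast at this ⊢; exact this
        _ ≤ Dconst k * ENNReal.ofReal (c * (l:ℝ) ^ (2*k+1)) := by
            rw [Dconst, ← ENNReal.ofReal_mul (by positivity)]
            apply ENNReal.ofReal_le_ofReal
            have h4 : ((l:ℝ)+1+1) ^ (2*k+1) ≤ ((4:ℝ)*l) ^ (2*k+1) :=
              Real.rpow_le_rpow (by linarith) (by linarith) ha.le
            have h5 : ((4:ℝ)*l) ^ (2*k+1) = (4:ℝ)^(2*k+1) * (l:ℝ)^(2*k+1) :=
              Real.mul_rpow (by norm_num) (by linarith)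
            have h42 : (4:ℝ) = (2:ℝ) ^ (2:ℝ) := by
              rw [show (2:ℝ) ^ (2:ℝ) = (2:ℝ) ^ (2:ℕ) from by rw [← Real.rpow_natCast]; norm_num]
              norm_num
            have h6 : (4:ℝ)^(2*k+1) ≤ (2:ℝ)^(2*(2*k+1)+1) := by
              have h43 : (4:ℝ)^(2*k+1) = (2:ℝ)^(2*(2*k+1)) := by
                rw [h42, ← Real.rpow_mul (by norm_num : (0:ℝ) ≤ 2)]
              rw [h43]
              exact Real.rpow_le_rpow_of_exponent_le (by norm_num) (by linarith)
            have hlp : (0:ℝ) ≤ (l:ℝ)^(2*k+1) := Real.rpow_nonneg (by linarith) _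
            calc c * ((l:ℝ)+1+1) ^ (2*k+1) ≤ c * ((4:ℝ)^(2*k+1) * (l:ℝ)^(2*k+1)) := by
                  rw [← h5]; exact mul_le_mul_of_nonneg_left h4 hcpos.le
              _ ≤ (2:ℝ)^(2*(2*k+1)+1) * (c * (l:ℝ)^(2*k+1)) := by
                  nlinarith [mul_le_mul_of_nonneg_right h6 (mul_nonneg hcpos.le hlp)]
        _ ≤ Dconst k * dunklMeasure k (Qcube l) :=
            mul_le_mul_right (cube_ge k hk l hl) _

lemma adjZ (k : ℝ) (hk : -1/2 < k) (l : ℤ) :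
    dunklMeasure k (Qcube l) ≤ Dconst k * dunklMeasure k (Qcube (l+1)) ∧
    dunklMeasure k (Qcube (l+1)) ≤ Dconst k * dunklMeasure k (Qcube l) := by
  rcases le_or_gt 0 l with hl | hl
  · exact adj_nat k hk l hl
  · rcases eq_or_lt_of_le (by omega : l ≤ -1) with h1 | h2
    · subst h1
      have hsym : dunklMeasure k (Qcube (-1)) = dunklMeasure k (Qcube 0) := by
        have := cube_sym k hk 0
        norm_num at this
        exact this
      have hD := Dconst_one_le k hk
      constructor
      · show dunklMeasure k (Qcube (-1)) ≤ Dconst k * dunklMeasure k (Qcube (-1+1))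
        rw [hsym, show (-1+1 : ℤ) = 0 by omega]
        nth_rewrite 1 [← one_mul (dunklMeasure k (Qcube 0))]
        exact mul_le_mul_left hD _
      · show dunklMeasure k (Qcube (-1+1)) ≤ Dconst k * dunklMeasure k (Qcube (-1))
        rw [hsym, show (-1+1 : ℤ) = 0 by omega]
        nth_rewrite 1 [← one_mul (dunklMeasure k (Qcube 0))]
        exact mul_le_mul_left hD _
    · set n : ℤ := -2 - l with hn
      have hn0 : 0 ≤ n := by omega
      have e1 : dunklMeasure k (Qcube l) = dunklMeasure k (Qcube (n+1)) := by
        have := cube_sym k hk (n+1)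
        rw [show (-1 - (n+1) : ℤ) = l by omega] at this
        exact this
      have e2 : dunklMeasure k (Qcube (l+1)) = dunklMeasure k (Qcube n) := by
        have := cube_sym k hk n
        rw [show (-1 - n : ℤ) = l + 1 by omega] at this
        exact this
      rw [e1, e2]
      exact ⟨(adj_nat k hk n hn0).2, (adj_nat k hk n hn0).1⟩

lemma cmp_six (k : ℝ) (hk : -1/2 < k) (l m : ℤ)
    (h : m = l - 1 ∨ m = l ∨ m = l + 1 ∨ m = -l - 2 ∨ m = -l - 1 ∨ m = -l) :
    dunklMeasure k (Qcube l) ≤ Dconst k * dunklMeasure k (Qcube m) := by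
  have base : ∀ m' : ℤ, m' = l - 1 ∨ m' = l ∨ m' = l + 1 →
      dunklMeasure k (Qcube l) ≤ Dconst k * dunklMeasure k (Qcube m') := by
    intro m' hm'
    rcases hm' with h' | h' | h'
    · rw [h']
      have := (adjZ k hk (l-1)).2
      rw [show (l - 1 + 1 : ℤ) = l by omega] at this
      exact this
    · rw [h']
      nth_rewrite 1 [← one_mul (dunklMeasure k (Qcube l))]
      exact mul_le_mul_left (Dconst_one_le k hk) _
    · rw [h']
      exact (adjZ k hk l).1
  rcases h with h' | h' | h' | h' | h' | h'
  · exact base m (by omega)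
  · exact base m (by omega)
  · exact base m (by omega)
  · subst h'
    have := cube_sym k hk (l+1)
    rw [show (-1 - (l+1) : ℤ) = -l - 2 by omega] at this
    rw [this]
    exact base (l+1) (by omega)
  · subst h'
    have := cube_sym k hk l
    rw [show (-1 - l : ℤ) = -l - 1 by omega] at this
    rw [this]
    exact base l (by omega)
  · subst h'
    have := cube_sym k hk (l-1)
    rw [show (-1 - (l-1) : ℤ) = -l by omega] at this
    rw [this]
    exact base (l-1) (by omega)

lemma mem_ball_of_same_cube {l : ℤ} {y z : ℝ} (hy : y ∈ Qcube l) (hz : z ∈ Qcube l)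
    (hz0 : z ≠ 0) : z ∈ dunklBall y 1 := by
  rw [Qcube, mem_Ico] at hy hz
  rw [dunklBall]
  by_cases hy0 : y = 0
  · subst hy0
    have hl0 : l = 0 := by
      have h1 : l ≤ 0 := by exact_mod_cast hy.1
      have h2 : (0:ℝ) < l + 1 := hy.2
      have h3 : (0:ℤ) < l + 1 := by exact_mod_cast h2
      omega
    simp only [if_pos rfl, mem_Ioo]
    subst hl0
    norm_num at hz
    constructor <;> [linarith [hz.1]; linarith [hz.2]]
  · rw [if_neg hy0]
    have habs : |(|z| - |y|)| ≤ |z - y| := abs_abs_sub_abs_le_abs_sub z y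
    have hzy : |z - y| < 1 := by
      rw [abs_sub_lt_iff]; constructor <;> linarith [hy.1, hy.2, hz.1, hz.2]
    have h3 : |z| - |y| < 1 ∧ |y| - |z| < 1 := by
      rw [← abs_sub_lt_iff]; exact lt_of_le_of_lt habs hzy
    refine ⟨max_lt (abs_pos.2 hz0) (by linarith [h3.2]), by linarith [h3.1]⟩

lemma ball_subset_cubes {l : ℤ} {y : ℝ} (hy : y ∈ Qcube l) :
    dunklBall y 1 ⊆ Qcube (l-1) ∪ Qcube l ∪ Qcube (l+1)
      ∪ (Qcube (-l-2) ∪ Qcube (-l-1) ∪ Qcube (-l)) := by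
  rw [Qcube, mem_Ico] at hy
  intro z hz
  -- basic bounds on |z|
  have hb : |y| - 1 < |z| ∧ |z| < |y| + 1 := by
    rw [dunklBall] at hz
    by_cases hy0 : y = 0
    · rw [if_pos hy0, mem_Ioo] at hz
      subst hy0
      rw [abs_zero]
      constructor
      · have := abs_nonneg z; linarith
      · rw [abs_lt]; constructor <;> [linarith [hz.1]; linarith [hz.2]]
    · rw [if_neg hy0, mem_setOf_eq] at hz
      exact ⟨lt_of_le_of_lt (le_max_right _ _) hz.1, hz.2⟩
  have hL : Ico ((l:ℝ)-1) ((l:ℝ)+2) ⊆ Qcube (l-1) ∪ Qcube l ∪ Qcube (l+1) := by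
    intro w hw
    simp only [Qcube, mem_union, mem_Ico, Int.cast_sub, Int.cast_add, Int.cast_one] at hw ⊢
    rcases lt_or_ge w (l:ℝ) with h | h
    · exact Or.inl (Or.inl ⟨by linarith [hw.1], by linarith⟩)
    · rcases lt_or_ge w ((l:ℝ)+1) with h' | h'
      · exact Or.inl (Or.inr ⟨h, h'⟩)
      · exact Or.inr ⟨h', by push_cast; linarith [hw.2]⟩
  have hR : Ico (-(l:ℝ)-2) (-(l:ℝ)+1) ⊆ Qcube (-l-2) ∪ Qcube (-l-1) ∪ Qcube (-l) := by
    intro w hw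
    simp only [Qcube, mem_union, mem_Ico, Int.cast_sub, Int.cast_add, Int.cast_one,
      Int.cast_neg] at hw ⊢
    rcases lt_or_ge w (-(l:ℝ)-1) with h | h
    · exact Or.inl (Or.inl ⟨by push_cast; linarith [hw.1], by push_cast; linarith⟩)
    · rcases lt_or_ge w (-(l:ℝ)) with h' | h'
      · exact Or.inl (Or.inr ⟨by push_cast; linarith, by push_cast; linarith⟩)
      · exact Or.inr ⟨by push_cast; linarith, by push_cast; linarith [hw.2]⟩
  have key : z ∈ Ico ((l:ℝ)-1) ((l:ℝ)+2) ∪ Ico (-(l:ℝ)-2) (-(l:ℝ)+1) := by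
    rcases le_or_gt 0 l with hl | hl
    · have hl' : (0:ℝ) ≤ (l:ℝ) := by exact_mod_cast hl
      have hyy : |y| = y := abs_of_nonneg (by linarith [hy.1])
      rw [hyy] at hb
      rcases le_or_gt 0 z with hz0 | hz0
      · left; rw [mem_Ico]
        rw [abs_of_nonneg hz0] at hb
        constructor <;> linarith [hy.1, hy.2, hb.1, hb.2]
      · right; rw [mem_Ico]
        rw [abs_of_neg hz0] at hb
        constructor <;> linarith [hy.1, hy.2, hb.1, hb.2]
    · have hl' : (l:ℝ) ≤ -1 := by exact_mod_cast (by omega : l ≤ -1)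
      have hyy : |y| = -y := abs_of_neg (by linarith [hy.2])
      rw [hyy] at hb
      rcases le_or_gt 0 z with hz0 | hz0
      · right; rw [mem_Ico]
        rw [abs_of_nonneg hz0] at hb
        constructor <;> linarith [hy.1, hy.2, hb.1, hb.2]
      · left; rw [mem_Ico]
        rw [abs_of_neg hz0] at hb
        constructor <;> linarith [hy.1, hy.2, hb.1, hb.2]
  rcases key with h | h
  · exact Or.inl (hL h)
  · exact Or.inr (hR h)

lemma esup_mono_ae {μ : Measure ℝ} {f : ℝ → ℂ} {s t : Set ℝ}
    (h : ∀ᵐ x ∂μ, x ∈ s → x ∈ t) :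
    eLpNorm (s.indicator f) ⊤ μ ≤ eLpNorm (t.indicator f) ⊤ μ := by
  apply eLpNorm_mono_ae
  filter_upwards [h] with x hx
  by_cases hxs : x ∈ s
  · rw [Set.indicator_of_mem hxs, Set.indicator_of_mem (hx hxs)]
  · rw [Set.indicator_of_notMem hxs]
    simpa using norm_nonneg _

lemma esup_mono_subset {μ : Measure ℝ} {f : ℝ → ℂ} {s t : Set ℝ} (h : s ⊆ t) :
    eLpNorm (s.indicator f) ⊤ μ ≤ eLpNorm (t.indicator f) ⊤ μ :=
  esup_mono_ae (Filter.Eventually.of_forall fun _ hx => h hx)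

lemma esup_union_le {μ : Measure ℝ} {f : ℝ → ℂ} (s t : Set ℝ) :
    eLpNorm ((s ∪ t).indicator f) ⊤ μ
      ≤ max (eLpNorm (s.indicator f) ⊤ μ) (eLpNorm (t.indicator f) ⊤ μ) := by
  simp only [eLpNorm_exponent_top]
  rw [eLpNormEssSup]
  apply essSup_le_of_ae_le (hfbdd := by isBoundedDefault)
  filter_upwards [enorm_ae_le_eLpNormEssSup (s.indicator f) μ,
    enorm_ae_le_eLpNormEssSup (t.indicator f) μ] with x h1 h2
  by_cases hxs : x ∈ s
  · have e : (s ∪ t).indicator f x = s.indicator f x := by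
      rw [Set.indicator_of_mem hxs, Set.indicator_of_mem (Set.mem_union_left t hxs)]
    rw [e]
    exact le_trans h1 (le_max_left _ _)
  · have e : (s ∪ t).indicator f x = t.indicator f x := by
      by_cases hxt : x ∈ t
      · rw [Set.indicator_of_mem hxt, Set.indicator_of_mem (Set.mem_union_right s hxt)]
      · rw [Set.indicator_of_notMem hxt, Set.indicator_of_notMem (fun h => by
          rcases h with h | h
          · exact hxs h
          · exact hxt h)]
    rw [e]
    exact le_trans h2 (le_max_right _ _)

lemma three_sup_le (a b c : ℝ≥0∞) : (a ⊔ b) ⊔ c ≤ a + b + c :=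
  sup_le (sup_le (le_self_add.trans le_self_add)
    ((le_add_self : b ≤ a + b).trans le_self_add)) le_add_self

lemma six_sup_le (a1 a2 a3 a4 a5 a6 : ℝ≥0∞) :
    ((a1 ⊔ a2) ⊔ a3) ⊔ ((a4 ⊔ a5) ⊔ a6) ≤ (a1 + a2 + a3) + (a4 + a5 + a6) :=
  sup_le ((three_sup_le a1 a2 a3).trans le_self_add)
    ((three_sup_le a4 a5 a6).trans le_add_self)

lemma iUnion_Qcube : ⋃ l : ℤ, Qcube l = univ := by
  ext x
  simp only [mem_iUnion, mem_univ, iff_true, Qcube, mem_Ico]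
  exact ⟨⌊x⌋, Int.floor_le x, by push_cast; exact Int.lt_floor_add_one x⟩

lemma Qcube_measurable (l : ℤ) : MeasurableSet (Qcube l) := by
  rw [Qcube]; exact measurableSet_Ico

lemma Qcube_disjoint : Pairwise (Function.onFun Disjoint Qcube) := by
  intro l m hlm
  have : ∀ a b : ℤ, a < b → Disjoint (Qcube a) (Qcube b) := by
    intro a b hab
    rw [Qcube, Qcube, Set.Ico_disjoint_Ico]
    have h1 : (a:ℝ) + 1 ≤ (b:ℝ) := by exact_mod_cast hab
    exact le_trans (min_le_left _ _) (le_trans h1 (le_max_right _ _))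
  rcases lt_or_gt_of_ne hlm with h | h
  · exact this l m h
  · exact (this m l h).symm


end Stmt6Aux

open Stmt6Aux

/-- For `1 ≤ p < ∞` there are constants `C₁, C₂ > 0` with
`C₁ \widetilde{‖f‖}_{∞,p} ≤ ‖f‖_{∞,p} ≤ C₂ \widetilde{‖f‖}_{∞,p}` for every measurable `f`. -/
theorem stmt6 (k : ℝ) (hk : -1/2 < k) (p : ℝ≥0∞) (hp1 : 1 ≤ p) (hp : p ≠ ⊤) :
    ∃ C₁ C₂ : ℝ≥0∞, 0 < C₁ ∧ C₁ ≠ ⊤ ∧ 0 < C₂ ∧ C₂ ≠ ⊤ ∧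
      ∀ f : ℝ → ℂ, Measurable f →
        C₁ * tNorm k ⊤ p f ≤ wNorm k p f ∧ wNorm k p f ≤ C₂ * tNorm k ⊤ p f := by
  have hp0 : p ≠ 0 := (zero_lt_one.trans_le hp1).ne'
  have hpr0 : 0 < p.toReal := ENNReal.toReal_pos hp0 hp
  set pr := p.toReal with hprdef
  set D := Dconst k with hD
  have hDpos : 0 < D := Dconst_pos k hk
  have hDnetop : D ≠ ⊤ := Dconst_ne_top k
  have hD6pos : 0 < D * 6 := ENNReal.mul_pos hDpos.ne' (by norm_num)
  have hD6netop : D * 6 ≠ ⊤ := ENNReal.mul_ne_top hDnetop (by norm_num)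
  have hC2pos : 0 < (D * 6) ^ (1/pr) := ENNReal.rpow_pos hD6pos hD6netop
  have hC2netop : (D * 6) ^ (1/pr) ≠ ⊤ :=
    ENNReal.rpow_ne_top_of_nonneg (by positivity) hD6netop
  refine ⟨1, (D * 6) ^ (1/pr), zero_lt_one, ENNReal.one_ne_top, hC2pos, hC2netop, ?_⟩
  intro f hf
  set μ := dunklMeasure k with hμ
  set N : ℤ → ℝ≥0∞ := fun m => eLpNorm ((Qcube m).indicator f) ⊤ μ with hN
  set G : ℝ → ℝ≥0∞ := fun y => eLpNorm ((dunklBall y 1).indicator f) ⊤ μ with hG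
  set T : ℤ → ℝ≥0∞ := fun m => μ (Qcube m) * N m ^ pr with hT
  set S : ℝ≥0∞ := ∑' l : ℤ, T l with hS
  set I : ℝ≥0∞ := ∫⁻ y, G y ^ pr ∂μ with hI
  have hwNorm : wNorm k p f = I ^ (1/pr) := by rw [wNorm, rNorm, if_neg hp]
  have htNorm : tNorm k ⊤ p f = S ^ (1/pr) := by rw [tNorm, if_neg hp]
  have hIsum : I = ∑' l : ℤ, ∫⁻ y in Qcube l, G y ^ pr ∂μ := by
    have h1 := lintegral_iUnion (μ := μ) Qcube_measurable Qcube_disjoint (fun y => G y ^ pr)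
    rw [iUnion_Qcube, Measure.restrict_univ] at h1
    rw [hI]
    exact h1
  have hae0 : ∀ᵐ x ∂μ, x ≠ (0:ℝ) := by
    rw [ae_iff]
    have he : {x : ℝ | ¬ x ≠ 0} = {0} := by ext x; simp
    rw [he]
    exact meas_singleton k 0
  -- lower bound
  have low : S ≤ I := by
    rw [hIsum, hS]
    apply ENNReal.tsum_le_tsum
    intro l
    calc T l = N l ^ pr * μ (Qcube l) := mul_comm _ _
      _ = ∫⁻ _ in Qcube l, N l ^ pr ∂μ := (setLIntegral_const _ _).symm
      _ ≤ ∫⁻ y in Qcube l, G y ^ pr ∂μ := by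
          apply setLIntegral_mono' (Qcube_measurable l)
          intro y hy
          apply ENNReal.rpow_le_rpow _ hpr0.le
          apply esup_mono_ae
          filter_upwards [hae0] with x hx0 hxQ
          exact mem_ball_of_same_cube hy hxQ hx0
  -- upper bound
  have step : ∀ l : ℤ, ∫⁻ y in Qcube l, G y ^ pr ∂μ
      ≤ D * ((T (l-1) + T l + T (l+1)) + (T (-l-2) + T (-l-1) + T (-l))) := by
    intro l
    set K : ℝ≥0∞ := ((N (l-1) ⊔ N l) ⊔ N (l+1)) ⊔ ((N (-l-2) ⊔ N (-l-1)) ⊔ N (-l)) with hK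
    have hGle : ∀ y ∈ Qcube l, G y ≤ K := by
      intro y hy
      refine (esup_mono_subset (ball_subset_cubes hy)).trans ?_
      refine le_trans (esup_union_le _ _) (max_le_max ?_ ?_)
      · exact le_trans (esup_union_le _ _) (max_le_max (esup_union_le _ _) le_rfl)
      · exact le_trans (esup_union_le _ _) (max_le_max (esup_union_le _ _) le_rfl)
    have hmax : ∀ a b : ℝ≥0∞, (a ⊔ b) ^ pr = a ^ pr ⊔ b ^ pr := fun a b =>
      Monotone.map_sup (fun x y hxy => ENNReal.rpow_le_rpow hxy hpr0.le) a b
    have hKpr : K ^ pr ≤ (N (l-1) ^ pr + N l ^ pr + N (l+1) ^ pr)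
        + (N (-l-2) ^ pr + N (-l-1) ^ pr + N (-l) ^ pr) := by
      rw [hK, hmax, hmax, hmax, hmax, hmax]
      exact six_sup_le _ _ _ _ _ _
    have hterm : ∀ m : ℤ, m = l - 1 ∨ m = l ∨ m = l + 1 ∨ m = -l - 2 ∨ m = -l - 1 ∨ m = -l →
        N m ^ pr * μ (Qcube l) ≤ D * T m := by
      intro m hm
      calc N m ^ pr * μ (Qcube l) ≤ N m ^ pr * (D * μ (Qcube m)) :=
            mul_le_mul_right (cmp_six k hk l m hm) _
        _ = D * T m := by rw [hT]; ring
    calc ∫⁻ y in Qcube l, G y ^ pr ∂μ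
        ≤ ∫⁻ _ in Qcube l, K ^ pr ∂μ := by
          apply setLIntegral_mono' (Qcube_measurable l)
          intro y hy
          exact ENNReal.rpow_le_rpow (hGle y hy) hpr0.le
      _ = K ^ pr * μ (Qcube l) := setLIntegral_const _ _
      _ ≤ ((N (l-1) ^ pr + N l ^ pr + N (l+1) ^ pr)
            + (N (-l-2) ^ pr + N (-l-1) ^ pr + N (-l) ^ pr)) * μ (Qcube l) :=
          mul_le_mul_left hKpr _
      _ = N (l-1) ^ pr * μ (Qcube l) + N l ^ pr * μ (Qcube l) + N (l+1) ^ pr * μ (Qcube l)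
            + (N (-l-2) ^ pr * μ (Qcube l) + N (-l-1) ^ pr * μ (Qcube l)
              + N (-l) ^ pr * μ (Qcube l)) := by ring
      _ ≤ D * T (l-1) + D * T l + D * T (l+1) + (D * T (-l-2) + D * T (-l-1) + D * T (-l)) := by
          refine add_le_add (add_le_add (add_le_add ?_ ?_) ?_) (add_le_add (add_le_add ?_ ?_) ?_)
          · exact hterm _ (by omega)
          · exact hterm _ (by omega)
          · exact hterm _ (by omega)
          · exact hterm _ (by omega)
          · exact hterm _ (by omega)
          · exact hterm _ (by omega)
      _ = D * ((T (l-1) + T l + T (l+1)) + (T (-l-2) + T (-l-1) + T (-l))) := by ring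
  have sum_eq : ∑' l : ℤ, ((T (l-1) + T l + T (l+1)) + (T (-l-2) + T (-l-1) + T (-l)))
      = (S + S + S) + (S + S + S) := by
    have r1 : ∑' l : ℤ, T (l-1) = S := by
      have := (Equiv.subRight (1:ℤ)).tsum_eq T
      simpa using this
    have r2 : ∑' l : ℤ, T (l+1) = S := by
      have := (Equiv.addRight (1:ℤ)).tsum_eq T
      simpa using this
    have r4 : ∑' l : ℤ, T (-l-2) = S := by
      have := ((Equiv.neg ℤ).trans (Equiv.subRight (2:ℤ))).tsum_eq T
      simpa using this
    have r5 : ∑' l : ℤ, T (-l-1) = S := by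
      have := ((Equiv.neg ℤ).trans (Equiv.subRight (1:ℤ))).tsum_eq T
      simpa using this
    have r6 : ∑' l : ℤ, T (-l) = S := by
      have := (Equiv.neg ℤ).tsum_eq T
      exact this
    rw [ENNReal.tsum_add, ENNReal.tsum_add, ENNReal.tsum_add, ENNReal.tsum_add,
      ENNReal.tsum_add, r1, r2, r4, r5, r6, hS]
  have up : I ≤ (D * 6) * S := by
    calc I ≤ ∑' l : ℤ, D * ((T (l-1) + T l + T (l+1)) + (T (-l-2) + T (-l-1) + T (-l))) := by
          rw [hIsum]; exact ENNReal.tsum_le_tsum step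
      _ = D * ∑' l : ℤ, ((T (l-1) + T l + T (l+1)) + (T (-l-2) + T (-l-1) + T (-l))) :=
          ENNReal.tsum_mul_left
      _ = D * ((S + S + S) + (S + S + S)) := by rw [sum_eq]
      _ = (D * 6) * S := by ring
  constructor
  · rw [one_mul, htNorm, hwNorm]
    exact ENNReal.rpow_le_rpow low (by positivity)
  · rw [htNorm, hwNorm]
    calc I ^ (1/pr) ≤ ((D * 6) * S) ^ (1/pr) := ENNReal.rpow_le_rpow up (by positivity)
      _ = (D * 6) ^ (1/pr) * S ^ (1/pr) := ENNReal.mul_rpow_of_nonneg _ _ (by positivity)
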